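/- Let μ : E → F be a vector bundle isomorphism over a diffeomorphism, acting on vector smoothing operators by (μ_*Φ)(u) := μ_*(Φ(μ*u)). Then the push-forward μ_* preserves all the defining properties of test objects and 0-test objects: (VSO1), (VSO2), (VSO2'), (VSO3), (VSO4), (VSO4'), as well as their uniform variants. In particular, μ_* maps test objects on E to test objects on F and 0-test objects to 0-test objects. -/

import Mathlib

set_option linter.unusedSectionVars false

noncomputable section

open Filter Topology Set

/-- `f ε = O(g ε)` as `ε → 0⁺`. -/
def BigOeps (f g : ℝ → ℝ) : Prop :=
  ∃ C > (0:ℝ), ∃ ε₁ > (0:ℝ), ∀ ε : ℝ, 0 < ε → ε ≤ ε₁ → f ε ≤ C * g ε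

section VSOConditions

variable {M : Type*} [TopologicalSpace M] {Fib : Type*} [Zero Fib]
variable {Γ D : Type*}
  [AddCommGroup Γ] [Module ℝ Γ] [TopologicalSpace Γ] [IsTopologicalAddGroup Γ] [ContinuousSMul ℝ Γ]
  [AddCommGroup D] [Module ℝ D] [TopologicalSpace D] [IsTopologicalAddGroup D] [ContinuousSMul ℝ D]

/-- The metric ball of radius `r` around `x` for a (Riemannian) distance function `d`. -/
def mball (d : M → M → ℝ) (x : M) (r : ℝ) : Set M := {y | d x y < r}

/-- (VSO1): locality of supports, relative to the open set `Uset`.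
`ev` is evaluation of sections at points, `van u A` means "the distribution `u`
vanishes on `A`", `mets` is the set of admissible Riemannian distance functions. -/
def VSO1 (Uset : Set M) (ev : Γ → M → Fib) (van : D → Set M → Prop)
    (mets : Set (M → M → ℝ)) (Φ : ℝ → (D →L[ℝ] Γ)) : Prop :=
  ∀ d ∈ mets, ∀ x₀ ∈ Uset, ∃ V : Set M, IsOpen V ∧ x₀ ∈ V ∧ V ⊆ Uset ∧
    ∀ r > (0:ℝ), ∃ ε₀ > (0:ℝ), ∀ ε : ℝ, 0 < ε → ε ≤ ε₀ →
      ∀ x ∈ V, ∀ u : D, van u (mball d x r) → ev (Φ ε u) x = 0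

/-- (VSO2): `Φ_ε → id` in `L(D', D')` (strong topology). `j` is the embedding of
smooth sections into distributions. -/
def VSO2 (j : Γ →L[ℝ] D) (Φ : ℝ → (D →L[ℝ] Γ)) : Prop :=
  Tendsto (fun ε => j.comp (Φ ε)) (𝓝[>] (0:ℝ)) (𝓝 (ContinuousLinearMap.id ℝ D))

/-- (VSO2'): `Φ_ε → 0` in `L(D', D')`. -/
def VSO2' (j : Γ →L[ℝ] D) (Φ : ℝ → (D →L[ℝ] Γ)) : Prop :=
  Tendsto (fun ε => j.comp (Φ ε)) (𝓝[>] (0:ℝ)) (𝓝 0)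

/-- (VSO3): moderate growth of all continuous seminorms of `Φ_ε` in `VSO = L(D', Γ)`. -/
def VSO3 (Φ : ℝ → (D →L[ℝ] Γ)) : Prop :=
  ∀ p : Seminorm ℝ (D →L[ℝ] Γ), Continuous p →
    ∃ N : ℕ, BigOeps (fun ε => p (Φ ε)) (fun ε => ε ^ (-(N:ℤ)))

/-- (VSO4): rapid convergence `Φ_ε|_Γ → id` in `L(Γ, Γ)`. -/
def VSO4 (j : Γ →L[ℝ] D) (Φ : ℝ → (D →L[ℝ] Γ)) : Prop :=
  ∀ p : Seminorm ℝ (Γ →L[ℝ] Γ), Continuous p → ∀ m : ℕ,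
    BigOeps (fun ε => p ((Φ ε).comp j - ContinuousLinearMap.id ℝ Γ)) (fun ε => ε ^ m)

/-- (VSO4'): rapid decay of `Φ_ε|_Γ` in `L(Γ, Γ)`. -/
def VSO4' (j : Γ →L[ℝ] D) (Φ : ℝ → (D →L[ℝ] Γ)) : Prop :=
  ∀ p : Seminorm ℝ (Γ →L[ℝ] Γ), Continuous p → ∀ m : ℕ,
    BigOeps (fun ε => p ((Φ ε).comp j)) (fun ε => ε ^ m)

/-- A test object: a net of vector smoothing operators satisfying (VSO1)–(VSO4). -/
def IsTestObject (Uset : Set M) (j : Γ →L[ℝ] D) (ev : Γ → M → Fib) (van : D → Set M → Prop)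
    (mets : Set (M → M → ℝ)) (Φ : ℝ → (D →L[ℝ] Γ)) : Prop :=
  VSO1 Uset ev van mets Φ ∧ VSO2 j Φ ∧ VSO3 Φ ∧ VSO4 j Φ

/-- A 0-test object: a net satisfying (VSO1), (VSO2'), (VSO3), (VSO4'). -/
def IsZeroTestObject (Uset : Set M) (j : Γ →L[ℝ] D) (ev : Γ → M → Fib) (van : D → Set M → Prop)
    (mets : Set (M → M → ℝ)) (Φ : ℝ → (D →L[ℝ] Γ)) : Prop :=
  VSO1 Uset ev van mets Φ ∧ VSO2' j Φ ∧ VSO3 Φ ∧ VSO4' j Φ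

/-- (UVSO1): (VSO1) uniformly over a set `S` of nets. -/
def UVSO1 (Uset : Set M) (ev : Γ → M → Fib) (van : D → Set M → Prop)
    (mets : Set (M → M → ℝ)) (S : Set (ℝ → (D →L[ℝ] Γ))) : Prop :=
  ∀ d ∈ mets, ∀ x₀ ∈ Uset, ∃ V : Set M, IsOpen V ∧ x₀ ∈ V ∧ V ⊆ Uset ∧
    ∀ r > (0:ℝ), ∃ ε₀ > (0:ℝ), ∀ Φ ∈ S, ∀ ε : ℝ, 0 < ε → ε ≤ ε₀ →
      ∀ x ∈ V, ∀ u : D, van u (mball d x r) → ev (Φ ε u) x = 0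

/-- (UVSO2): `Φ_ε → id` in `L(D', D')` uniformly over `S`, measured by seminorms. -/
def UVSO2 (j : Γ →L[ℝ] D) (S : Set (ℝ → (D →L[ℝ] Γ))) : Prop :=
  ∀ p : Seminorm ℝ (D →L[ℝ] D), Continuous p → ∀ δ > (0:ℝ), ∃ ε₀ > (0:ℝ),
    ∀ Φ ∈ S, ∀ ε : ℝ, 0 < ε → ε ≤ ε₀ →
      p (j.comp (Φ ε) - ContinuousLinearMap.id ℝ D) ≤ δ

/-- (UVSO2'): `Φ_ε → 0` in `L(D', D')` uniformly over `S`. -/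
def UVSO2' (j : Γ →L[ℝ] D) (S : Set (ℝ → (D →L[ℝ] Γ))) : Prop :=
  ∀ p : Seminorm ℝ (D →L[ℝ] D), Continuous p → ∀ δ > (0:ℝ), ∃ ε₀ > (0:ℝ),
    ∀ Φ ∈ S, ∀ ε : ℝ, 0 < ε → ε ≤ ε₀ → p (j.comp (Φ ε)) ≤ δ

/-- (UVSO3): (VSO3) uniformly over `S`. -/
def UVSO3 (S : Set (ℝ → (D →L[ℝ] Γ))) : Prop :=
  ∀ p : Seminorm ℝ (D →L[ℝ] Γ), Continuous p → ∃ N : ℕ, ∃ C > (0:ℝ), ∃ ε₁ > (0:ℝ),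
    ∀ Φ ∈ S, ∀ ε : ℝ, 0 < ε → ε ≤ ε₁ → p (Φ ε) ≤ C * ε ^ (-(N:ℤ))

/-- (UVSO4): (VSO4) uniformly over `S`. -/
def UVSO4 (j : Γ →L[ℝ] D) (S : Set (ℝ → (D →L[ℝ] Γ))) : Prop :=
  ∀ p : Seminorm ℝ (Γ →L[ℝ] Γ), Continuous p → ∀ m : ℕ, ∃ C > (0:ℝ), ∃ ε₁ > (0:ℝ),
    ∀ Φ ∈ S, ∀ ε : ℝ, 0 < ε → ε ≤ ε₁ →
      p ((Φ ε).comp j - ContinuousLinearMap.id ℝ Γ) ≤ C * ε ^ m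

/-- (UVSO4'): (VSO4') uniformly over `S`. -/
def UVSO4' (j : Γ →L[ℝ] D) (S : Set (ℝ → (D →L[ℝ] Γ))) : Prop :=
  ∀ p : Seminorm ℝ (Γ →L[ℝ] Γ), Continuous p → ∀ m : ℕ, ∃ C > (0:ℝ), ∃ ε₁ > (0:ℝ),
    ∀ Φ ∈ S, ∀ ε : ℝ, 0 < ε → ε ≤ ε₁ → p ((Φ ε).comp j) ≤ C * ε ^ m

/-- A uniform set of test objects. -/
def IsUniformTOSet (Uset : Set M) (j : Γ →L[ℝ] D) (ev : Γ → M → Fib) (van : D → Set M → Prop)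
    (mets : Set (M → M → ℝ)) (S : Set (ℝ → (D →L[ℝ] Γ))) : Prop :=
  (∀ Φ ∈ S, IsTestObject Uset j ev van mets Φ) ∧
    UVSO1 Uset ev van mets S ∧ UVSO2 j S ∧ UVSO3 S ∧ UVSO4 j S

/-- A uniform set of 0-test objects. -/
def IsUniformZeroTOSet (Uset : Set M) (j : Γ →L[ℝ] D) (ev : Γ → M → Fib) (van : D → Set M → Prop)
    (mets : Set (M → M → ℝ)) (S : Set (ℝ → (D →L[ℝ] Γ))) : Prop :=
  (∀ Φ ∈ S, IsZeroTestObject Uset j ev van mets Φ) ∧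
    UVSO1 Uset ev van mets S ∧ UVSO2' j S ∧ UVSO3 S ∧ UVSO4' j S

end VSOConditions
/-!
# Statement 5

Let `μ : E → F` be a vector bundle isomorphism over a diffeomorphism `f : M → N`,
acting on vector smoothing operators by `(μ_*Φ)(u) := μ_*(Φ(μ^*u))`.  Then `μ_*`
preserves all the defining properties of test objects and 0-test objects:
(VSO1), (VSO2), (VSO2'), (VSO3), (VSO4), (VSO4'), as well as their uniform variants.
In particular `μ_*` maps test objects on `E` to test objects on `F` and 0-test objects
to 0-test objects.

Abstraction: `ΓE, DE` (resp. `ΓF, DF`) are the spaces of sections/distributions of `E → M`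
(resp. `F → N`), `μΓ, μD` the push-forwards of sections/distributions along `μ` (continuous
linear equivalences), `f : M ≃ₜ N` the underlying diffeomorphism.  The hypotheses record the
classical compatibilities: `j` commutes with `μ`, evaluation/vanishing correspond under `μ`
and `f`, and pullbacks of admissible Riemannian distance functions are admissible.
-/

section Statement5

variable {M N : Type*} [TopologicalSpace M] [TopologicalSpace N] {Fib : Type*} [Zero Fib]
variable {ΓE DE ΓF DF : Type*}
  [AddCommGroup ΓE] [Module ℝ ΓE] [TopologicalSpace ΓE] [IsTopologicalAddGroup ΓE]
  [ContinuousSMul ℝ ΓE]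
  [AddCommGroup DE] [Module ℝ DE] [TopologicalSpace DE] [IsTopologicalAddGroup DE]
  [ContinuousSMul ℝ DE]
  [AddCommGroup ΓF] [Module ℝ ΓF] [TopologicalSpace ΓF] [IsTopologicalAddGroup ΓF]
  [ContinuousSMul ℝ ΓF]
  [AddCommGroup DF] [Module ℝ DF] [TopologicalSpace DF] [IsTopologicalAddGroup DF]
  [ContinuousSMul ℝ DF]

/-- Push-forward of a net of vector smoothing operators along `μ`:
`(μ_*Φ)(u) = μ_*(Φ(μ^*u))`. -/
def pushVSOnet (μΓ : ΓE ≃L[ℝ] ΓF) (μD : DE ≃L[ℝ] DF) (Φ : ℝ → (DE →L[ℝ] ΓE)) :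
    ℝ → (DF →L[ℝ] ΓF) :=
  fun ε => (μΓ : ΓE →L[ℝ] ΓF).comp ((Φ ε).comp (μD.symm : DF →L[ℝ] DE))


/-- Pull back a continuous seminorm along a continuous linear equivalence. -/
lemma seminorm_pullback {X Y : Type*}
    [AddCommGroup X] [Module ℝ X] [TopologicalSpace X]
    [AddCommGroup Y] [Module ℝ Y] [TopologicalSpace Y]
    (e : X ≃L[ℝ] Y) (p : Seminorm ℝ Y) (hp : Continuous p) :
    ∃ q : Seminorm ℝ X, Continuous (⇑q) ∧ ∀ x : X, p (e x) = q x := by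
  refine ⟨p.comp ((e : X →L[ℝ] Y) : X →ₗ[ℝ] Y), ?_, fun x => rfl⟩
  exact hp.comp e.continuous

/-- The push-forward `μ_*` along a vector bundle isomorphism over a
diffeomorphism preserves (VSO1)–(VSO4), (VSO2'), (VSO4') and their uniform variants;
in particular it maps test objects on `E` to test objects on `F` and 0-test objects
to 0-test objects. -/
theorem pushforward_preserves_test_objects
    (f : M ≃ₜ N)
    (jE : ΓE →L[ℝ] DE) (evE : ΓE → M → Fib) (vanE : DE → Set M → Prop)
    (metsE : Set (M → M → ℝ))
    (jF : ΓF →L[ℝ] DF) (evF : ΓF → N → Fib) (vanF : DF → Set N → Prop)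
    (metsF : Set (N → N → ℝ))
    (μΓ : ΓE ≃L[ℝ] ΓF) (μD : DE ≃L[ℝ] DF)
    -- the push-forwards commute with the inclusions of sections into distributions:
    (hj : jF.comp (μΓ : ΓE →L[ℝ] ΓF) = (μD : DE →L[ℝ] DF).comp jE)
    -- evaluation of sections corresponds under `μ` and `f`:
    (hev : ∀ (s : ΓE) (x : M), evE s x = 0 ↔ evF (μΓ s) (f x) = 0)
    -- vanishing of distributions on subsets corresponds under `μ` and `f`:
    (hvan : ∀ (v : DF) (A : Set N), vanF v A ↔ vanE (μD.symm v) (f ⁻¹' A))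
    -- pullbacks of admissible Riemannian distance functions are admissible:
    (hmets : ∀ d ∈ metsF, (fun x y : M => d (f x) (f y)) ∈ metsE) :
    (∀ Φ : ℝ → (DE →L[ℝ] ΓE),
      (VSO1 (univ : Set M) evE vanE metsE Φ →
        VSO1 (univ : Set N) evF vanF metsF (pushVSOnet μΓ μD Φ)) ∧
      (VSO2 jE Φ → VSO2 jF (pushVSOnet μΓ μD Φ)) ∧
      (VSO2' jE Φ → VSO2' jF (pushVSOnet μΓ μD Φ)) ∧
      (VSO3 Φ → VSO3 (pushVSOnet μΓ μD Φ)) ∧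
      (VSO4 jE Φ → VSO4 jF (pushVSOnet μΓ μD Φ)) ∧
      (VSO4' jE Φ → VSO4' jF (pushVSOnet μΓ μD Φ))) ∧
    (∀ S : Set (ℝ → (DE →L[ℝ] ΓE)),
      (UVSO1 (univ : Set M) evE vanE metsE S →
        UVSO1 (univ : Set N) evF vanF metsF (pushVSOnet μΓ μD '' S)) ∧
      (UVSO2 jE S → UVSO2 jF (pushVSOnet μΓ μD '' S)) ∧
      (UVSO2' jE S → UVSO2' jF (pushVSOnet μΓ μD '' S)) ∧
      (UVSO3 S → UVSO3 (pushVSOnet μΓ μD '' S)) ∧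
      (UVSO4 jE S → UVSO4 jF (pushVSOnet μΓ μD '' S)) ∧
      (UVSO4' jE S → UVSO4' jF (pushVSOnet μΓ μD '' S))) ∧
    (∀ Φ : ℝ → (DE →L[ℝ] ΓE),
      (IsTestObject (univ : Set M) jE evE vanE metsE Φ →
        IsTestObject (univ : Set N) jF evF vanF metsF (pushVSOnet μΓ μD Φ)) ∧
      (IsZeroTestObject (univ : Set M) jE evE vanE metsE Φ →
        IsZeroTestObject (univ : Set N) jF evF vanF metsF (pushVSOnet μΓ μD Φ))) := by
  classical
  set cDΓ : (DE →L[ℝ] ΓE) ≃L[ℝ] (DF →L[ℝ] ΓF) := μD.arrowCongr μΓ with hcDΓ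
  set cDD : (DE →L[ℝ] DE) ≃L[ℝ] (DF →L[ℝ] DF) := μD.arrowCongr μD with hcDD
  set cΓΓ : (ΓE →L[ℝ] ΓE) ≃L[ℝ] (ΓF →L[ℝ] ΓF) := μΓ.arrowCongr μΓ with hcΓΓ
  have hpush : ∀ (Φ : ℝ → (DE →L[ℝ] ΓE)) (ε : ℝ),
      pushVSOnet μΓ μD Φ ε = cDΓ (Φ ε) := fun _ _ => rfl
  have hjFμ : ∀ s : ΓF, μD.symm (jF s) = jE (μΓ.symm s) := by
    intro s
    have h1 := DFunLike.congr_fun hj (μΓ.symm s)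
    simp only [ContinuousLinearMap.comp_apply, ContinuousLinearEquiv.coe_coe,
      μΓ.apply_symm_apply] at h1
    rw [h1, μD.symm_apply_apply]
  have hkey2 : ∀ (Φ : ℝ → (DE →L[ℝ] ΓE)) (ε : ℝ),
      jF.comp (pushVSOnet μΓ μD Φ ε) = cDD (jE.comp (Φ ε)) := by
    intro Φ ε
    ext u
    have h1 := DFunLike.congr_fun hj ((Φ ε) (μD.symm u))
    simpa [pushVSOnet, hcDD, ContinuousLinearEquiv.arrowCongr_apply] using h1
  have hkey3 : ∀ (Φ : ℝ → (DE →L[ℝ] ΓE)) (ε : ℝ),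
      (pushVSOnet μΓ μD Φ ε).comp jF = cΓΓ ((Φ ε).comp jE) := by
    intro Φ ε
    ext s
    simp [pushVSOnet, hcΓΓ, ContinuousLinearEquiv.arrowCongr_apply, hjFμ s]
  have hidDD : cDD (ContinuousLinearMap.id ℝ DE) = ContinuousLinearMap.id ℝ DF := by
    ext u; simp [hcDD, ContinuousLinearEquiv.arrowCongr_apply]
  have hidΓΓ : cΓΓ (ContinuousLinearMap.id ℝ ΓE) = ContinuousLinearMap.id ℝ ΓF := by
    ext s; simp [hcΓΓ, ContinuousLinearEquiv.arrowCongr_apply]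
  -- VSO1-style transfer (works for both single nets and uniform families,
  -- so we prove the geometric part once)
  have hset : ∀ (d : N → N → ℝ) (y : N) (r : ℝ),
      f ⁻¹' (mball d y r) = mball (fun x y : M => d (f x) (f y)) (f.symm y) r := by
    intro d y r
    ext x
    simp [mball, Homeomorph.apply_symm_apply]
  have hevpush : ∀ (Φ : ℝ → (DE →L[ℝ] ΓE)) (ε : ℝ) (u : DF) (y : N),
      evE ((Φ ε) (μD.symm u)) (f.symm y) = 0 →
        evF ((pushVSOnet μΓ μD Φ ε) u) y = 0 := by
    intro Φ ε u y h
    have h2 := (hev ((Φ ε) (μD.symm u)) (f.symm y)).mp h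
    rw [f.apply_symm_apply] at h2
    exact h2
  -- the main per-net block
  have main1 : ∀ Φ : ℝ → (DE →L[ℝ] ΓE),
      (VSO1 (univ : Set M) evE vanE metsE Φ →
        VSO1 (univ : Set N) evF vanF metsF (pushVSOnet μΓ μD Φ)) ∧
      (VSO2 jE Φ → VSO2 jF (pushVSOnet μΓ μD Φ)) ∧
      (VSO2' jE Φ → VSO2' jF (pushVSOnet μΓ μD Φ)) ∧
      (VSO3 Φ → VSO3 (pushVSOnet μΓ μD Φ)) ∧
      (VSO4 jE Φ → VSO4 jF (pushVSOnet μΓ μD Φ)) ∧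
      (VSO4' jE Φ → VSO4' jF (pushVSOnet μΓ μD Φ)) := by
    intro Φ
    refine ⟨?_, ?_, ?_, ?_, ?_, ?_⟩
    · -- VSO1
      intro h d hd y₀ _
      obtain ⟨V, hVopen, hxV, _, hV⟩ :=
        h (fun x y : M => d (f x) (f y)) (hmets d hd) (f.symm y₀) (mem_univ _)
      refine ⟨f.symm ⁻¹' V, hVopen.preimage f.symm.continuous, by simpa using hxV,
        subset_univ _, ?_⟩
      intro r hr
      obtain ⟨ε₀, hε₀, H⟩ := hV r hr
      refine ⟨ε₀, hε₀, ?_⟩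
      intro ε h1 h2 y hy u hu
      have hvan' : vanE (μD.symm u) (mball (fun x y : M => d (f x) (f y)) (f.symm y) r) := by
        rw [← hset]
        exact (hvan u (mball d y r)).mp hu
      exact hevpush Φ ε u y (H ε h1 h2 (f.symm y) hy (μD.symm u) hvan')
    · -- VSO2
      intro h
      have h2 : Tendsto (fun ε => cDD (jE.comp (Φ ε))) (𝓝[>] (0:ℝ))
          (𝓝 (cDD (ContinuousLinearMap.id ℝ DE))) :=
        (cDD.continuous.tendsto _).comp h
      rw [hidDD] at h2
      unfold VSO2
      simpa only [hkey2 Φ] using h2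
    · -- VSO2'
      intro h
      have h2 : Tendsto (fun ε => cDD (jE.comp (Φ ε))) (𝓝[>] (0:ℝ)) (𝓝 (cDD 0)) :=
        (cDD.continuous.tendsto _).comp h
      rw [map_zero] at h2
      unfold VSO2'
      simpa only [hkey2 Φ] using h2
    · -- VSO3
      intro h p hp
      obtain ⟨q, hqc, hq⟩ := seminorm_pullback cDΓ p hp
      obtain ⟨Nn, C, hC, ε₁, hε₁, hb⟩ := h q hqc
      refine ⟨Nn, C, hC, ε₁, hε₁, fun ε h1 h2 => ?_⟩
      beta_reduce
      rw [hpush Φ ε, hq]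
      exact hb ε h1 h2
    · -- VSO4
      intro h p hp m
      obtain ⟨q, hqc, hq⟩ := seminorm_pullback cΓΓ p hp
      obtain ⟨C, hC, ε₁, hε₁, hb⟩ := h q hqc m
      refine ⟨C, hC, ε₁, hε₁, fun ε h1 h2 => ?_⟩
      beta_reduce
      rw [hkey3 Φ ε, ← hidΓΓ, ← map_sub, hq]
      exact hb ε h1 h2
    · -- VSO4'
      intro h p hp m
      obtain ⟨q, hqc, hq⟩ := seminorm_pullback cΓΓ p hp
      obtain ⟨C, hC, ε₁, hε₁, hb⟩ := h q hqc m
      refine ⟨C, hC, ε₁, hε₁, fun ε h1 h2 => ?_⟩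
      beta_reduce
      rw [hkey3 Φ ε, hq]
      exact hb ε h1 h2
  refine ⟨main1, ?_, ?_⟩
  · -- uniform block
    intro S
    refine ⟨?_, ?_, ?_, ?_, ?_, ?_⟩
    · -- UVSO1
      intro h d hd y₀ _
      obtain ⟨V, hVopen, hxV, _, hV⟩ :=
        h (fun x y : M => d (f x) (f y)) (hmets d hd) (f.symm y₀) (mem_univ _)
      refine ⟨f.symm ⁻¹' V, hVopen.preimage f.symm.continuous, by simpa using hxV,
        subset_univ _, ?_⟩
      intro r hr
      obtain ⟨ε₀, hε₀, H⟩ := hV r hr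
      refine ⟨ε₀, hε₀, ?_⟩
      rintro Ψ ⟨Φ, hΦS, rfl⟩ ε h1 h2 y hy u hu
      have hvan' : vanE (μD.symm u) (mball (fun x y : M => d (f x) (f y)) (f.symm y) r) := by
        rw [← hset]
        exact (hvan u (mball d y r)).mp hu
      exact hevpush Φ ε u y (H Φ hΦS ε h1 h2 (f.symm y) hy (μD.symm u) hvan')
    · -- UVSO2
      intro h p hp δ hδ
      obtain ⟨q, hqc, hq⟩ := seminorm_pullback cDD p hp
      obtain ⟨ε₀, hε₀, H⟩ := h q hqc δ hδ
      refine ⟨ε₀, hε₀, ?_⟩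
      rintro Ψ ⟨Φ, hΦS, rfl⟩ ε h1 h2
      rw [hkey2 Φ ε, ← hidDD, ← map_sub, hq]
      exact H Φ hΦS ε h1 h2
    · -- UVSO2'
      intro h p hp δ hδ
      obtain ⟨q, hqc, hq⟩ := seminorm_pullback cDD p hp
      obtain ⟨ε₀, hε₀, H⟩ := h q hqc δ hδ
      refine ⟨ε₀, hε₀, ?_⟩
      rintro Ψ ⟨Φ, hΦS, rfl⟩ ε h1 h2
      rw [hkey2 Φ ε, hq]
      exact H Φ hΦS ε h1 h2
    · -- UVSO3
      intro h p hp
      obtain ⟨q, hqc, hq⟩ := seminorm_pullback cDΓ p hp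
      obtain ⟨Nn, C, hC, ε₁, hε₁, hb⟩ := h q hqc
      refine ⟨Nn, C, hC, ε₁, hε₁, ?_⟩
      rintro Ψ ⟨Φ, hΦS, rfl⟩ ε h1 h2
      rw [hpush Φ ε, hq]
      exact hb Φ hΦS ε h1 h2
    · -- UVSO4
      intro h p hp m
      obtain ⟨q, hqc, hq⟩ := seminorm_pullback cΓΓ p hp
      obtain ⟨C, hC, ε₁, hε₁, hb⟩ := h q hqc m
      refine ⟨C, hC, ε₁, hε₁, ?_⟩
      rintro Ψ ⟨Φ, hΦS, rfl⟩ ε h1 h2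
      rw [hkey3 Φ ε, ← hidΓΓ, ← map_sub, hq]
      exact hb Φ hΦS ε h1 h2
    · -- UVSO4'
      intro h p hp m
      obtain ⟨q, hqc, hq⟩ := seminorm_pullback cΓΓ p hp
      obtain ⟨C, hC, ε₁, hε₁, hb⟩ := h q hqc m
      refine ⟨C, hC, ε₁, hε₁, ?_⟩
      rintro Ψ ⟨Φ, hΦS, rfl⟩ ε h1 h2
      rw [hkey3 Φ ε, hq]
      exact hb Φ hΦS ε h1 h2
  · -- test objects and 0-test objects
    intro Φ
    obtain ⟨h1, h2, h2', h3, h4, h4'⟩ := main1 Φ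
    exact ⟨fun ⟨a, b, c, d⟩ => ⟨h1 a, h2 b, h3 c, h4 d⟩,
      fun ⟨a, b, c, d⟩ => ⟨h1 a, h2' b, h3 c, h4' d⟩⟩


end Statement5
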